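/- For the normal-form renaming transformation: let φ be a branching-time formula with a subformula Nψ, let p be a fresh proposition, and let φ' be obtained from φ by replacing the occurrence of Nψ by p and conjoining AG(p ↔ Nψ). Then φ' is satisfiable if and only if φ is satisfiable. -/
import Mathlib


/-- Branching-time formulas over propositions `P`, with the forgettable-past
operator `N`; `EU a b` is `E(a U b)`.  `EF`, `AG`, `↔` are derived below. -/
inductive BForm (P : Type) where
  | tt
  | atom (p : P)
  | not (a : BForm P)
  | and (a b : BForm P)
  | EX (a : BForm P)
  | EU (a b : BForm P)
  | N (a : BForm P)
deriving DecidableEq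

/-- Semantics over a labeled tree `(T,V)` at node `x`.  On trees, the
existential until quantifies over descendants; `N a` re-roots the tree at the
current node (forgetting the past). -/
def BSat {P : Type} : Set (List ℕ) → (List ℕ → Set P) → List ℕ → BForm P → Prop
  | _, _, _, .tt => True
  | _, V, x, .atom p => p ∈ V x
  | T, V, x, .not a => ¬ BSat T V x a
  | T, V, x, .and a b => BSat T V x a ∧ BSat T V x b
  | T, V, x, .EX a => ∃ c : ℕ, x ++ [c] ∈ T ∧ BSat T V (x ++ [c]) a
  | T, V, x, .EU a b => ∃ y, x <+: y ∧ y ∈ T ∧ BSat T V y b ∧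
      ∀ z, x <+: z → z <+: y → z ≠ y → BSat T V z a
  | T, V, x, .N a => BSat {y | x ++ y ∈ T} (fun y => V (x ++ y)) [] a

/-- `AG a := ¬EF¬a = ¬E(true U ¬a)`. -/
def BForm.AG {P : Type} (a : BForm P) : BForm P := .not (.EU .tt (.not a))

/-- `a ↔ b` as an abbreviation. -/
def BForm.iff {P : Type} (a b : BForm P) : BForm P :=
  .and (.not (.and a (.not b))) (.not (.and b (.not a)))

/-- Replace every occurrence of the subformula `t` by `r`. -/
def replaceAll {P : Type} [DecidableEq P] (t r : BForm P) : BForm P → BForm P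
  | .tt => if (BForm.tt : BForm P) = t then r else .tt
  | .atom p => if BForm.atom p = t then r else .atom p
  | .not a => if BForm.not a = t then r else .not (replaceAll t r a)
  | .and a b => if BForm.and a b = t then r
      else .and (replaceAll t r a) (replaceAll t r b)
  | .EX a => if BForm.EX a = t then r else .EX (replaceAll t r a)
  | .EU a b => if BForm.EU a b = t then r
      else .EU (replaceAll t r a) (replaceAll t r b)
  | .N a => if BForm.N a = t then r else .N (replaceAll t r a)

/-- `s` occurs as a subformula of `f`. -/
def IsSubf {P : Type} (s : BForm P) : BForm P → Prop
  | .tt => BForm.tt = s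
  | .atom p => BForm.atom p = s
  | .not a => BForm.not a = s ∨ IsSubf s a
  | .and a b => BForm.and a b = s ∨ IsSubf s a ∨ IsSubf s b
  | .EX a => BForm.EX a = s ∨ IsSubf s a
  | .EU a b => BForm.EU a b = s ∨ IsSubf s a ∨ IsSubf s b
  | .N a => BForm.N a = s ∨ IsSubf s a

/-- The propositions occurring in a formula. -/
def atoms {P : Type} : BForm P → Set P
  | .tt => ∅
  | .atom p => {p}
  | .not a => atoms a
  | .and a b => atoms a ∪ atoms b
  | .EX a => atoms a
  | .EU a b => atoms a ∪ atoms b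
  | .N a => atoms a

/-- A tree: prefix-closed, sibling-downward-closed subset of ℕ*. -/
def IsTree (T : Set (List ℕ)) : Prop :=
  [] ∈ T ∧ (∀ x : List ℕ, ∀ c : ℕ, x ++ [c] ∈ T → x ∈ T) ∧
    (∀ x : List ℕ, ∀ c c' : ℕ, x ++ [c] ∈ T → c' < c → x ++ [c'] ∈ T)

/-- `N` is absolute: its truth does not depend on re-rooting. -/
lemma Nabs {P : Type} (a : BForm P) (T : Set (List ℕ)) (V : List ℕ → Set P)
    (y w : List ℕ) :
    BSat {u | y ++ u ∈ T} (fun u => V (y ++ u)) w (.N a) ↔ BSat T V (y ++ w) (.N a) := by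
  have h1 : {u | w ++ u ∈ {u | y ++ u ∈ T}} = {u | (y ++ w) ++ u ∈ T} := by
    ext u; simp [List.append_assoc]
  have h2 : (fun u => V (y ++ (w ++ u))) = (fun u => V ((y ++ w) ++ u)) := by
    funext u; simp [List.append_assoc]
  show BSat {u | w ++ u ∈ {u | y ++ u ∈ T}} (fun u => V (y ++ (w ++ u))) [] a ↔
    BSat {u | (y ++ w) ++ u ∈ T} (fun u => V ((y ++ w) ++ u)) [] a
  rw [h1, h2]

/-- Satisfaction only depends on the labeling of the atoms occurring. -/
lemma irrel {P : Type} : ∀ (χ : BForm P) (T : Set (List ℕ))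
    (V V' : List ℕ → Set P) (x : List ℕ),
    (∀ y q, q ∈ atoms χ → (q ∈ V y ↔ q ∈ V' y)) →
    (BSat T V x χ ↔ BSat T V' x χ)
  | .tt, T, V, V', x, h => Iff.rfl
  | .atom q, T, V, V', x, h => h x q rfl
  | .not a, T, V, V', x, h => not_congr (irrel a T V V' x h)
  | .and a b, T, V, V', x, h =>
      and_congr (irrel a T V V' x fun y q hq => h y q (Or.inl hq))
        (irrel b T V V' x fun y q hq => h y q (Or.inr hq))
  | .EX a, T, V, V', x, h => by
      show (∃ c : ℕ, _) ↔ _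
      exact exists_congr fun c => and_congr_right fun _ =>
        irrel a T V V' (x ++ [c]) h
  | .EU a b, T, V, V', x, h => by
      show (∃ y, _) ↔ _
      refine exists_congr fun y => and_congr_right fun _ =>
        and_congr_right fun _ => and_congr
          (irrel b T V V' y fun y q hq => h y q (Or.inr hq)) ?_
      exact forall_congr' fun z => imp_congr_right fun _ =>
        imp_congr_right fun _ => imp_congr_right fun _ =>
          irrel a T V V' z fun y q hq => h y q (Or.inl hq)
  | .N a, T, V, V', x, h => by
      show BSat _ (fun y => V (x ++ y)) [] a ↔ BSat _ (fun y => V' (x ++ y)) [] a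
      exact irrel a _ _ _ [] fun y q hq => h (x ++ y) q hq

/-- Atoms of a subformula are atoms of the formula. -/
lemma subf_atoms {P : Type} (s : BForm P) :
    ∀ f : BForm P, IsSubf s f → atoms s ⊆ atoms f := by
  intro f
  induction f with
  | tt => rintro rfl; exact subset_rfl
  | atom q => rintro rfl; exact subset_rfl
  | not a ih => rintro (rfl | h); exact subset_rfl; exact ih h
  | and a b iha ihb =>
      rintro (rfl | h | h)
      · exact subset_rfl
      · exact (iha h).trans Set.subset_union_left
      · exact (ihb h).trans Set.subset_union_right
  | EX a ih => rintro (rfl | h); exact subset_rfl; exact ih h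
  | EU a b iha ihb =>
      rintro (rfl | h | h)
      · exact subset_rfl
      · exact (iha h).trans Set.subset_union_left
      · exact (ihb h).trans Set.subset_union_right
  | N a ih => rintro (rfl | h); exact subset_rfl; exact ih h

/-- Trees are prefix-closed. -/
lemma tree_prefix_closed {T : Set (List ℕ)} (hT : IsTree T) :
    ∀ z y : List ℕ, z <+: y → y ∈ T → z ∈ T := by
  have key : ∀ (s z : List ℕ), z ++ s ∈ T → z ∈ T := by
    intro s
    induction s using List.reverseRecOn with
    | nil => intro z h; simpa using h
    | append_singleton s c ih =>
        intro z h
        rw [← List.append_assoc] at h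
        exact ih z (hT.2.1 _ _ h)
  rintro z y ⟨s, rfl⟩ h
  exact key s z h

/-- The replacement lemma: if `p ↔ Nψ` holds at every node of the (prefix-closed)
tree reachable from the base `x`, replacing `Nψ` by `p` preserves truth. -/
lemma repl_lemma {P : Type} [DecidableEq P] (ψ : BForm P) (p : P) :
    ∀ (χ : BForm P) (T : Set (List ℕ)) (V : List ℕ → Set P) (x v : List ℕ),
    (∀ z y : List ℕ, z <+: y → y ∈ T → z ∈ T) →
    (∀ y, x <+: y → y ∈ T → (p ∈ V y ↔ BSat T V y (.N ψ))) →
    v ∈ T → x <+: v →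
    (BSat T V v (replaceAll (.N ψ) (.atom p) χ) ↔ BSat T V v χ) := by
  intro χ
  induction χ with
  | tt => intro T V x v hc hg hv hxv; rw [replaceAll, if_neg (by simp)]
  | atom q => intro T V x v hc hg hv hxv; rw [replaceAll, if_neg (by simp)]
  | not a ih =>
      intro T V x v hc hg hv hxv
      rw [replaceAll, if_neg (by simp)]
      exact not_congr (ih T V x v hc hg hv hxv)
  | and a b iha ihb =>
      intro T V x v hc hg hv hxv
      rw [replaceAll, if_neg (by simp)]
      exact and_congr (iha T V x v hc hg hv hxv) (ihb T V x v hc hg hv hxv)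
  | EX a ih =>
      intro T V x v hc hg hv hxv
      rw [replaceAll, if_neg (by simp)]
      show (∃ c : ℕ, _) ↔ _
      exact exists_congr fun c => and_congr_right fun hm =>
        ih T V x (v ++ [c]) hc hg hm (hxv.trans (v.prefix_append [c]))
  | EU a b iha ihb =>
      intro T V x v hc hg hv hxv
      rw [replaceAll, if_neg (by simp)]
      show (∃ y, _) ↔ _
      refine exists_congr fun y => and_congr_right fun hvy =>
        and_congr_right fun hy => and_congr
          (ihb T V x y hc hg hy (hxv.trans hvy)) ?_
      refine forall_congr' fun z => imp_congr_right fun hvz =>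
        imp_congr_right fun hzy => imp_congr_right fun _ =>
          iha T V x z hc hg (hc z y hzy hy) (hxv.trans hvz)
  | N a ih =>
      intro T V x v hc hg hv hxv
      rw [replaceAll]
      by_cases hcase : BForm.N a = BForm.N ψ
      · rw [if_pos hcase, hcase]
        exact hg v hxv hv
      · rw [if_neg hcase]
        show BSat {u | v ++ u ∈ T} (fun u => V (v ++ u)) []
              (replaceAll (.N ψ) (.atom p) a) ↔
            BSat {u | v ++ u ∈ T} (fun u => V (v ++ u)) [] a
        refine ih {u | v ++ u ∈ T} (fun u => V (v ++ u)) [] [] ?_ ?_ ?_ ?_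
        · intro z y hzy hy
          exact hc (v ++ z) (v ++ y) ((List.prefix_append_right_inj v).mpr hzy) hy
        · intro y _ hy
          rw [Nabs ψ T V v y]
          exact hg (v ++ y) (hxv.trans (v.prefix_append y)) hy
        · show v ++ [] ∈ T; simpa using hv
        · exact List.nil_prefix

/-- if `Nψ` is a subformula of `φ` and `p` is a fresh
proposition, replacing the occurrences of `Nψ` in `φ` by `p` and conjoining
`AG(p ↔ Nψ)` yields an equisatisfiable formula. -/
theorem stmt13 {P : Type} [DecidableEq P] (φ ψ : BForm P) (p : P)
    (hsub : IsSubf (BForm.N ψ) φ)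
    (hfresh : p ∉ atoms φ) :
    (∃ T V x, IsTree T ∧ x ∈ T ∧
        BSat T V x (BForm.and (replaceAll (BForm.N ψ) (BForm.atom p) φ)
          (BForm.AG ((BForm.atom p).iff (BForm.N ψ))))) ↔
      (∃ T V x, IsTree T ∧ x ∈ T ∧ BSat T V x φ) := by
  constructor
  · rintro ⟨T, V, x, hT, hx, hsat⟩
    simp only [BSat] at hsat
    obtain ⟨h1, h2⟩ := hsat
    -- from AG, the equivalence p ↔ Nψ holds at all descendants of x
    have hg : ∀ y, x <+: y → y ∈ T → (p ∈ V y ↔ BSat T V y (.N ψ)) := by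
      intro y hxy hy
      have hiff : BSat T V y ((BForm.atom p).iff (.N ψ)) := by
        by_contra hniff
        exact h2 ⟨y, hxy, hy, hniff, fun z _ _ _ => trivial⟩
      simp only [BForm.iff, BSat] at hiff
      constructor
      · intro hp
        by_contra hB
        exact hiff.1 ⟨hp, hB⟩
      · intro hB
        by_contra hp
        exact hiff.2 ⟨hB, hp⟩
    have := (repl_lemma ψ p φ T V x x (tree_prefix_closed hT) hg hx
      (List.prefix_refl x)).mp h1
    exact ⟨T, V, x, hT, hx, this⟩
  · rintro ⟨T, V, x, hT, hx, hφ⟩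
    -- relabel p to hold exactly where Nψ holds
    set V' : List ℕ → Set P :=
      fun y => {q | (q ∈ V y ∧ q ≠ p) ∨ (q = p ∧ BSat T V y (.N ψ))} with hV'
    have hpψ : p ∉ atoms ψ := fun h => hfresh (subf_atoms _ _ hsub h)
    have hagreeφ : ∀ y q, q ∈ atoms φ → (q ∈ V y ↔ q ∈ V' y) := by
      intro y q hq
      have hqp : q ≠ p := fun h => hfresh (h ▸ hq)
      simp [hV', hqp]
    have hagreeψ : ∀ y q, q ∈ atoms (BForm.N ψ) → (q ∈ V y ↔ q ∈ V' y) := by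
      intro y q hq
      have hqp : q ≠ p := fun h => hpψ (h ▸ hq)
      simp [hV', hqp]
    have hgood : ∀ y, p ∈ V' y ↔ BSat T V' y (.N ψ) := by
      intro y
      rw [← irrel (BForm.N ψ) T V V' y hagreeψ]
      simp [hV']
    refine ⟨T, V', x, hT, hx, ?_, ?_⟩
    · exact (repl_lemma ψ p φ T V' x x (tree_prefix_closed hT)
        (fun y _ hy => hgood y) hx (List.prefix_refl x)).mpr
        ((irrel φ T V V' x hagreeφ).mp hφ)
    · show ¬ BSat T V' x (.EU .tt (.not ((BForm.atom p).iff (.N ψ))))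
      rintro ⟨y, hxy, hy, hniff, -⟩
      apply hniff
      simp only [BForm.iff, BSat]
      have := hgood y
      constructor
      · rintro ⟨hp, hB⟩; exact hB (this.mp hp)
      · rintro ⟨hB, hp⟩; exact hp (this.mpr hB)
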